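/- For all ordinals α < I and all ordinals β, γ: ψ_{Ω_{α+1}} β < ψ_I γ if and only if α < ψ_I γ. -/

import Mathlib

open Ordinal Set

noncomputable section

/-- A cardinal is weakly inaccessible: uncountable, regular, and a limit cardinal. -/
def WeaklyInaccessible (c : Cardinal) : Prop :=
  Cardinal.aleph0 < c ∧ c.IsRegular ∧ ∀ x < c, Order.succ x < c

/-- `I` is (the initial ordinal of) the least weakly inaccessible cardinal. -/
def I : Ordinal := (sInf {c : Cardinal | WeaklyInaccessible c}).ord

/-- `Om α` is `Ω_α`: `0` for `α = 0` and the initial ordinal of `ℵ_α` otherwise. -/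
def Om (α : Ordinal) : Ordinal := if α = 0 then 0 else (Cardinal.aleph α).ord

/-- `R = {Ω_{μ+1} : μ < I} ∪ {I}`. -/
def R : Set Ordinal := {o | (∃ μ < I, o = Om (μ + 1)) ∨ o = I}

/-- Given the family of hulls at earlier stages, the collapse `ψ_σ`. -/
def psiOf (F : Set Ordinal → Set Ordinal) (σ : Ordinal) : Ordinal :=
  sInf ({β | β < σ ∧ σ ∈ F (Set.Iio β) ∧ F (Set.Iio β) ∩ Set.Iio σ ⊆ Set.Iio β} ∪ {σ})

instance : WellFoundedRelation Ordinal := ⟨(· < ·), Ordinal.lt_wf⟩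

/-- `H α X` is the least set of ordinals containing `X ∪ {0, I}` and closed under
ordinal addition, `β ↦ ω^β`, `β ↦ Ω_β`, and `(σ, β) ↦ ψ_σ β` for `σ ∈ R` and `β < α`. -/
def H (α : Ordinal) (X : Set Ordinal) : Set Ordinal :=
  ⋂₀ {Y : Set Ordinal | X ∪ {0, I} ⊆ Y ∧
      (∀ γ ∈ Y, ∀ δ ∈ Y, γ + δ ∈ Y) ∧
      (∀ γ ∈ Y, Ordinal.omega0 ^ γ ∈ Y) ∧
      (∀ γ ∈ Y, Om γ ∈ Y) ∧
      (∀ σ ∈ R, ∀ β ∈ Y, β < α → σ ∈ Y → psiOf (H β) σ ∈ Y)}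
termination_by α
decreasing_by assumption

/-- The collapsing function `ψ_σ α`. -/
def psi (σ α : Ordinal) : Ordinal := psiOf (H α) σ

/-- The relation `δ₀ ≪ δ₁ {η}`. -/
def llr (η δ₀ δ₁ : Ordinal) : Prop :=
  δ₀ < δ₁ ∧ ∀ σ ∈ R, ∀ α : Ordinal,
    δ₁ ∈ H α (Set.Iio (psi σ α)) → η ∈ H α (Set.Iio (psi σ α)) → δ₀ ∈ H α (Set.Iio (psi σ α))

/-! ### Auxiliary lemmas -/

/-- The closure predicate defining `H`. -/
def Closed (α : Ordinal) (X Y : Set Ordinal) : Prop :=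
  X ∪ {0, I} ⊆ Y ∧
      (∀ γ ∈ Y, ∀ δ ∈ Y, γ + δ ∈ Y) ∧
      (∀ γ ∈ Y, Ordinal.omega0 ^ γ ∈ Y) ∧
      (∀ γ ∈ Y, Om γ ∈ Y) ∧
      (∀ σ ∈ R, ∀ β ∈ Y, β < α → σ ∈ Y → psiOf (H β) σ ∈ Y)

lemma H_def (α : Ordinal) (X : Set Ordinal) : H α X = ⋂₀ {Y | Closed α X Y} := by
  rw [H]; rfl

lemma H_min {α : Ordinal} {X Y : Set Ordinal} (h : Closed α X Y) : H α X ⊆ Y := by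
  rw [H_def]; exact sInter_subset_of_mem h

lemma H_closed (α : Ordinal) (X : Set Ordinal) : Closed α X (H α X) := by
  rw [H_def]
  refine ⟨fun x hx => mem_sInter.2 fun Y hY => hY.1 hx, ?_, ?_, ?_, ?_⟩
  · exact fun γ hγ δ hδ => mem_sInter.2 fun Y hY => hY.2.1 γ (hγ Y hY) δ (hδ Y hY)
  · exact fun γ hγ => mem_sInter.2 fun Y hY => hY.2.2.1 γ (hγ Y hY)
  · exact fun γ hγ => mem_sInter.2 fun Y hY => hY.2.2.2.1 γ (hγ Y hY)
  · exact fun σ hσ β hβ hβα hσ' =>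
      mem_sInter.2 fun Y hY => hY.2.2.2.2 σ hσ β (hβ Y hY) hβα (hσ' Y hY)

lemma subset_H (α : Ordinal) (X : Set Ordinal) : X ⊆ H α X :=
  fun _ hx => (H_closed α X).1 (mem_union_left _ hx)

lemma zero_mem_H (α : Ordinal) (X : Set Ordinal) : (0 : Ordinal) ∈ H α X :=
  (H_closed α X).1 (mem_union_right _ (by simp))

lemma I_mem_H (α : Ordinal) (X : Set Ordinal) : I ∈ H α X :=
  (H_closed α X).1 (mem_union_right _ (by simp))

lemma one_mem_H (α : Ordinal) (X : Set Ordinal) : (1 : Ordinal) ∈ H α X := by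
  have := (H_closed α X).2.2.1 0 (zero_mem_H α X)
  rwa [opow_zero] at this

lemma psiOf_le (F : Set Ordinal → Set Ordinal) (σ : Ordinal) : psiOf F σ ≤ σ :=
  csInf_le' (mem_union_right _ rfl)

lemma psiOf_cases (F : Set Ordinal → Set Ordinal) (σ : Ordinal) :
    psiOf F σ = σ ∨ (psiOf F σ < σ ∧ σ ∈ F (Set.Iio (psiOf F σ)) ∧
      F (Set.Iio (psiOf F σ)) ∩ Set.Iio σ ⊆ Set.Iio (psiOf F σ)) := by
  have hmem : psiOf F σ ∈
      ({β | β < σ ∧ σ ∈ F (Set.Iio β) ∧ F (Set.Iio β) ∩ Set.Iio σ ⊆ Set.Iio β} ∪ {σ}) :=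
    csInf_mem ⟨σ, mem_union_right _ rfl⟩
  rcases hmem with h | h
  · exact Or.inr ⟨h.1, h.2.1, h.2.2⟩
  · exact Or.inl h

/-! ### Cardinal facts -/

universe u

lemma wi_I (hne : ({c : Cardinal.{u} | WeaklyInaccessible c}).Nonempty) :
    WeaklyInaccessible (sInf {c : Cardinal.{u} | WeaklyInaccessible c}) :=
  csInf_mem hne

lemma I_isLimit (hne : ({c : Cardinal.{u} | WeaklyInaccessible c}).Nonempty) :
    Order.IsSuccLimit I.{u} :=
  Cardinal.isSuccLimit_ord (wi_I hne).1.le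

lemma aleph_ord_lt_I (hne : ({c : Cardinal.{u} | WeaklyInaccessible c}).Nonempty) :
    ∀ o < I.{u}, (Cardinal.aleph o).ord < I.{u} := by
  have hc := wi_I hne
  set c := sInf {c : Cardinal | WeaklyInaccessible c} with hcdef
  have hI : I = c.ord := rfl
  intro o
  induction o using Ordinal.induction with
  | h o IH =>
    intro ho
    rw [hI, Cardinal.ord_lt_ord]
    rcases Ordinal.zero_or_succ_or_isSuccLimit o with rfl | ⟨a, rfl⟩ | hlim
    · rw [Cardinal.aleph_zero]; exact hc.1
    · have ha : a < I := (Order.lt_succ a).trans ho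
      have := IH a (Order.lt_succ a) ha
      rw [hI, Cardinal.ord_lt_ord] at this
      rw [Cardinal.aleph_succ]
      exact hc.2.2 _ this
    · have hbsup : Ordinal.bsup o (fun a _ => (Cardinal.ord ∘ Cardinal.aleph) a)
          = (Cardinal.ord ∘ Cardinal.aleph) o :=
        Ordinal.IsNormal.bsup_eq (Cardinal.isNormal_ord.comp Cardinal.isNormal_aleph) hlim
      have hoc : o < c.ord := ho
      have hlt : Ordinal.bsup o (fun a _ => (Cardinal.ord ∘ Cardinal.aleph) a) < c.ord :=
        Cardinal.bsup_lt_ord_of_isRegular hc.2.1 (Cardinal.lt_ord.1 hoc)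
          fun a hao => IH a hao (hao.trans ho)
      rw [hbsup] at hlt
      exact Cardinal.ord_lt_ord.1 hlt

lemma Om_lt_I (hne : ({c : Cardinal.{u} | WeaklyInaccessible c}).Nonempty) :
    ∀ o < I.{u}, Om o < I.{u} := by
  intro o ho
  unfold Om
  split
  · exact lt_of_lt_of_le (by simpa using (I_isLimit hne).bot_lt) le_rfl
  · exact aleph_ord_lt_I hne o ho

lemma le_aleph_ord (o : Ordinal) : o ≤ (Cardinal.aleph o).ord :=
  (Cardinal.isNormal_ord.comp Cardinal.isNormal_aleph).strictMono.id_le o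

lemma Om_succ_eq (α : Ordinal) : Om (α + 1) = (Cardinal.aleph (α + 1)).ord := by
  unfold Om
  rw [if_neg]
  intro h
  exact absurd h (by rw [Ordinal.add_one_eq_succ]; exact (Order.succ_ne_bot α))

lemma lt_Om_succ (α : Ordinal) : α < Om (α + 1) := by
  rw [Om_succ_eq]
  exact lt_of_lt_of_le (lt_add_one α) (le_aleph_ord (α + 1))

lemma aleph0_lt_aleph_succ (α : Ordinal) : Cardinal.aleph0 < Cardinal.aleph (α + 1) := by
  rw [← Cardinal.aleph_zero, Cardinal.aleph_lt_aleph]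
  exact lt_of_le_of_lt (zero_le : 0 ≤ α) (lt_add_one α)

lemma Om_succ_isLimit (α : Ordinal) : Order.IsSuccLimit (Om (α + 1)) := by
  rw [Om_succ_eq]; exact Cardinal.isSuccLimit_ord (aleph0_lt_aleph_succ α).le

lemma aleph_succ_isRegular (α : Ordinal) : (Cardinal.aleph (α + 1)).IsRegular := by
  rw [Ordinal.add_one_eq_succ]
  exact Cardinal.isRegular_aleph_succ α

lemma add_lt_Om_succ {α a b : Ordinal} (ha : a < Om (α + 1)) (hb : b < Om (α + 1)) :
    a + b < Om (α + 1) := by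
  rw [Om_succ_eq] at *
  rw [Cardinal.lt_ord] at *
  rw [Ordinal.card_add]
  exact Cardinal.add_lt_of_lt (aleph0_lt_aleph_succ α).le ha hb

lemma opow_lt_ord {c : Cardinal} (hreg : c.IsRegular) (hc : Cardinal.aleph0 < c) :
    ∀ o < c.ord, Ordinal.omega0 ^ o < c.ord := by
  intro o
  induction o using Ordinal.induction with
  | h o IH =>
    intro ho
    rcases Ordinal.zero_or_succ_or_isSuccLimit o with rfl | ⟨a, rfl⟩ | hlim
    · rw [opow_zero]
      calc (1 : Ordinal) < ω := Ordinal.one_lt_omega0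
        _ = Cardinal.aleph0.ord := Cardinal.ord_aleph0.symm
        _ ≤ c.ord := Cardinal.ord_le_ord.2 hc.le
    · rw [← Ordinal.add_one_eq_succ, opow_add, opow_one]
      have ha := IH a (lt_add_one a) ((lt_add_one a).trans (by rwa [Ordinal.add_one_eq_succ]))
      rw [Cardinal.lt_ord] at ha ⊢
      rw [Ordinal.card_mul, Ordinal.card_omega0]
      exact Cardinal.mul_lt_of_lt hreg.1 ha hc
    · rw [opow_limit Ordinal.omega0_ne_zero hlim, Ordinal.iSup_Iio_eq_bsup.{_, 0} (f := fun a _ => ω ^ a)]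
      exact Cardinal.bsup_lt_ord_of_isRegular.{_, 0} hreg (Cardinal.lt_ord.1 ho)
        fun a hao => IH a hao (hao.trans ho)

lemma opow_lt_Om_succ {α a : Ordinal} (ha : a < Om (α + 1)) :
    Ordinal.omega0 ^ a < Om (α + 1) := by
  rw [Om_succ_eq] at *
  exact opow_lt_ord (aleph_succ_isRegular α) (aleph0_lt_aleph_succ α) a ha

lemma Om_eq_Om_succ {α γ : Ordinal} (h : Om γ = Om (α + 1)) : γ = α + 1 := by
  rcases eq_or_ne γ 0 with rfl | hγ
  · exfalso
    have := lt_Om_succ α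
    rw [← h] at this
    simp [Om] at this
  · rw [Om_succ_eq] at h
    unfold Om at h
    rw [if_neg hγ] at h
    have := Cardinal.ord_injective h
    have h2 : γ ≤ α + 1 ∧ α + 1 ≤ γ := by
      constructor <;> rw [← Cardinal.aleph_le_aleph, this]
    exact le_antisymm h2.1 h2.2

/-! ### The key exclusion lemma -/

lemma key (hne : ({c : Cardinal.{u} | WeaklyInaccessible c}).Nonempty) {α p β : Ordinal.{u}}
    (hαI : α < I) (hpα : p ≤ α)
    (h3 : H β (Set.Iio p) ∩ Set.Iio (Om (α + 1)) ⊆ Set.Iio p) :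
    Om (α + 1) ∉ H β (Set.Iio p) := by
  intro hmem
  have hαΩ : α < Om (α + 1) := lt_Om_succ α
  have hsuccΩ : α + 1 < Om (α + 1) := by
    have := (Om_succ_isLimit α).succ_lt hαΩ
    rwa [← Ordinal.add_one_eq_succ] at this
  have hsuccI : α + 1 < I := by
    have := (I_isLimit hne).succ_lt hαI
    rwa [← Ordinal.add_one_eq_succ] at this
  have hΩI : Om (α + 1) < I := Om_lt_I hne _ hsuccI
  have hcl := H_closed β (Set.Iio p)
  have hsub : H β (Set.Iio p) ⊆ H β (Set.Iio p) \ {Om (α + 1)} := by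
    apply H_min
    refine ⟨?_, ?_, ?_, ?_, ?_⟩
    · intro x hx
      refine ⟨hcl.1 hx, ?_⟩
      simp only [mem_singleton_iff]
      rcases hx with hx | hx
      · exact ne_of_lt (lt_of_lt_of_le hx (hpα.trans hαΩ.le))
      · rcases hx with rfl | hx
        · exact ne_of_lt (lt_of_le_of_lt (zero_le : 0 ≤ α) hαΩ)
        · rw [mem_singleton_iff] at hx; subst hx
          exact ne_of_gt hΩI
    · rintro x ⟨hx, hxne⟩ y ⟨hy, hyne⟩
      refine ⟨hcl.2.1 x hx y hy, ?_⟩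
      simp only [mem_singleton_iff] at *
      intro heq
      rcases lt_trichotomy x (Om (α + 1)) with h | h | h
      · rcases lt_trichotomy y (Om (α + 1)) with h' | h' | h'
        · exact absurd heq (ne_of_lt (add_lt_Om_succ h h'))
        · exact hyne h'
        · exact absurd heq (ne_of_gt (lt_of_lt_of_le h' (le_add_self (a := y) (b := x))))
      · exact hxne h
      · exact absurd heq (ne_of_gt (lt_of_lt_of_le h (le_self_add (a := x) (b := y))))
    · rintro x ⟨hx, hxne⟩
      refine ⟨hcl.2.2.1 x hx, ?_⟩
      simp only [mem_singleton_iff] at *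
      intro heq
      rcases lt_trichotomy x (Om (α + 1)) with h | h | h
      · exact absurd heq (ne_of_lt (opow_lt_Om_succ h))
      · exact hxne h
      · exact absurd heq
          (ne_of_gt (lt_of_lt_of_le h (Ordinal.right_le_opow x Ordinal.one_lt_omega0)))
    · rintro x ⟨hx, hxne⟩
      refine ⟨hcl.2.2.2.1 x hx, ?_⟩
      simp only [mem_singleton_iff] at *
      intro heq
      have hxval : x = α + 1 := Om_eq_Om_succ heq
      subst hxval
      have : α + 1 < p := h3 ⟨hx, hsuccΩ⟩
      exact absurd (lt_of_lt_of_le this hpα) (not_lt.2 (lt_add_one α).le)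
    · rintro σ hσ β' ⟨hβ', hβ'ne⟩ hβ'β ⟨hσmem, hσne⟩
      refine ⟨hcl.2.2.2.2 σ hσ β' hβ' hβ'β hσmem, ?_⟩
      simp only [mem_singleton_iff] at *
      intro heq
      rcases psiOf_cases (H β') σ with hq | ⟨hq1, hq2, hq3⟩
      · rw [heq] at hq; exact hσne hq.symm
      · rw [heq] at hq1 hq2 hq3
        have hmem1 : α + 1 ∈ H β' (Set.Iio (Om (α + 1))) :=
          subset_H _ _ hsuccΩ
        have hmem2 : Om (α + 1) ∈ H β' (Set.Iio (Om (α + 1))) :=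
          (H_closed β' _).2.2.2.1 _ hmem1
        have : Om (α + 1) ∈ Set.Iio (Om (α + 1)) := hq3 ⟨hmem2, hq1⟩
        exact absurd this (by simp)
  exact (hsub hmem).2 rfl

/-! ### Main theorem -/

theorem stmt8 (hex : ∃ c : Cardinal, WeaklyInaccessible c) :
    ∀ α < I, ∀ β γ : Ordinal, (psi (Om (α + 1)) β < psi I γ ↔ α < psi I γ) := by
  intro α hα β γ
  have hne : ({c : Cardinal | WeaklyInaccessible c}).Nonempty := by
    by_contra h
    rw [Set.not_nonempty_iff_eq_empty] at h
    rw [show I = (sInf {c : Cardinal | WeaklyInaccessible c}).ord from rfl, h,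
      Cardinal.sInf_empty] at hα
    simp at hα
  have hαΩ : α < Om (α + 1) := lt_Om_succ α
  have hsuccI : α + 1 < I := by
    have := (I_isLimit hne).succ_lt hα
    rwa [← Ordinal.add_one_eq_succ] at this
  have hΩI : Om (α + 1) < I := Om_lt_I hne _ hsuccI
  have hψdef : psi I γ = psiOf (H γ) I := rfl
  rcases psiOf_cases (H γ) I with hI | ⟨h1, h2, h3⟩
  · rw [hψdef, hI]
    exact ⟨fun _ => hα, fun _ => lt_of_le_of_lt (psiOf_le _ _) hΩI⟩
  · constructor
    · intro hlt
      by_contra hno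
      push_neg at hno
      rcases psiOf_cases (H β) (Om (α + 1)) with hp | ⟨hp1, hp2, hp3⟩
      · have hΩlt : Om (α + 1) < psi I γ := by
          have : psi (Om (α + 1)) β = Om (α + 1) := hp
          rwa [this] at hlt
        exact absurd ((hαΩ.trans hΩlt).trans_le hno) (lt_irrefl α)
      · exact key hne hα (le_of_lt (lt_of_lt_of_le hlt hno)) hp3 hp2
    · intro hαψ
      have h0 : α ∈ H γ (Set.Iio (psi I γ)) := subset_H _ _ hαψ
      have hone : (1 : Ordinal) ∈ H γ (Set.Iio (psi I γ)) := one_mem_H _ _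
      have hs : α + 1 ∈ H γ (Set.Iio (psi I γ)) := (H_closed _ _).2.1 α h0 1 hone
      have hOm : Om (α + 1) ∈ H γ (Set.Iio (psi I γ)) := (H_closed _ _).2.2.2.1 _ hs
      have h4 : Om (α + 1) < psi I γ := h3 ⟨(by rw [hψdef] at hOm; exact hOm), hΩI⟩
      exact lt_of_le_of_lt (psiOf_le _ _) h4

end
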